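/- For an elementary abelian 2-group V and integer n > 0, the largest subgroup of R^n(V) = I(V)/I(V)^{n+1} annihilated by 2 is naturally isomorphic to I(V)^n/I(V)^{n+1}. -/

import Mathlib

/-- The augmentation map of the integral group ring `ℤ[V]`. -/
noncomputable def aug (V : Type) [AddCommGroup V] :
    AddMonoidAlgebra ℤ V →ₐ[ℤ] ℤ :=
  AddMonoidAlgebra.lift ℤ ℤ V 1

/-- The augmentation ideal `I(V)` of `ℤ[V]`. -/
noncomputable def augIdeal (V : Type) [AddCommGroup V] :
    Ideal (AddMonoidAlgebra ℤ V) :=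
  RingHom.ker (aug V).toRingHom

namespace Aux

variable (V : Type) [AddCommGroup V]

abbrev R := AddMonoidAlgebra ℤ V

noncomputable def g (v : V) : R V := AddMonoidAlgebra.single v 1

lemma g_mul (v w : V) : g V v * g V w = g V (v + w) := by
  simp [g, AddMonoidAlgebra.single_mul_single]

lemma aug_g (v : V) : aug V (g V v) = 1 := by
  simp [aug, g, AddMonoidAlgebra.lift_single]

lemma aug_single (v : V) (c : ℤ) : aug V (AddMonoidAlgebra.single v c) = c := by
  simp [aug, AddMonoidAlgebra.lift_single]

lemma gsub_mem (v : V) : g V v - 1 ∈ augIdeal V := by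
  simp [augIdeal, RingHom.mem_ker, map_sub, aug_g]

lemma mem_span_gsub (x : R V) (hx : x ∈ augIdeal V) :
    x ∈ Submodule.span ℤ (Set.range fun v : V => g V v - 1) := by
  have haug : aug V x = ∑ v ∈ x.coeff.support, x.coeff v := by
    conv_lhs => rw [← AddMonoidAlgebra.sum_coeff_single x]
    rw [Finsupp.sum, map_sum]
    exact Finset.sum_congr rfl fun v _ => aug_single V v (x.coeff v)
  have hx0 : aug V x = 0 := by
    simpa [augIdeal, RingHom.mem_ker] using hx
  have hrep : x = ∑ v ∈ x.coeff.support, x.coeff v • (g V v - 1) := by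
    have : ∑ v ∈ x.coeff.support, x.coeff v • (g V v - 1)
        = (∑ v ∈ x.coeff.support, AddMonoidAlgebra.single v (x.coeff v))
          - (∑ v ∈ x.coeff.support, x.coeff v) • (1 : R V) := by
      rw [Finset.sum_smul, ← Finset.sum_sub_distrib]
      refine Finset.sum_congr rfl fun v _ => ?_
      rw [smul_sub]
      congr 1
      simp [g, AddMonoidAlgebra.smul_single']
    rw [this, ← haug, hx0, zero_smul, sub_zero, ← Finsupp.sum, AddMonoidAlgebra.sum_coeff_single]
  rw [hrep]
  exact Submodule.sum_mem _ fun v _ =>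
    Submodule.smul_mem _ _ (Submodule.subset_span ⟨v, rfl⟩)


section Two
variable [Module (ZMod 2) V]

lemma add_self (v : V) : v + v = 0 := by
  have : v + v = (2 : ZMod 2) • v := (two_smul (ZMod 2) v).symm
  rw [this, show (2 : ZMod 2) = 0 from rfl, zero_smul]

lemma g_sq (v : V) : g V v * g V v = 1 := by
  rw [g_mul, add_self]
  rfl

lemma two_gsub (v : V) : (2 : R V) * (g V v - 1) = -((g V v - 1) * (g V v - 1)) := by
  have h := g_sq V v
  linear_combination h

lemma two_mul_mem_sq (y : R V) (hy : y ∈ augIdeal V) : 2 * y ∈ augIdeal V ^ 2 := by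
  have hy' := mem_span_gsub V y hy
  clear hy
  induction hy' using Submodule.span_induction with
  | mem z hz =>
      obtain ⟨v, rfl⟩ := hz
      rw [two_gsub]
      exact neg_mem (by
        rw [sq]
        exact Ideal.mul_mem_mul (gsub_mem V v) (gsub_mem V v))
  | zero => simp
  | add a b _ _ ha hb => rw [mul_add]; exact add_mem ha hb
  | smul c a _ ha =>
      rw [mul_smul_comm, zsmul_eq_mul]
      exact Ideal.mul_mem_left _ _ ha

lemma two_mul_mem (m : ℕ) (x : R V) (hx : x ∈ augIdeal V ^ (m + 1)) :
    2 * x ∈ augIdeal V ^ (m + 2) := by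
  rw [pow_succ] at hx
  refine Submodule.mul_induction_on hx (fun a ha b hb => ?_) (fun y z hy hz => ?_)
  · have h2b : 2 * b ∈ augIdeal V ^ 2 := two_mul_mem_sq V b hb
    have : a * (2 * b) ∈ augIdeal V ^ m * augIdeal V ^ 2 := Ideal.mul_mem_mul ha h2b
    rw [← pow_add] at this
    have h : 2 * (a * b) = a * (2 * b) := by ring
    rw [h]
    exact this
  · rw [mul_add]; exact add_mem hy hz

lemma two_smul_mem {n : ℕ} (hn : 0 < n) (x : R V) (hx : x ∈ augIdeal V ^ n) :
    (2 : ℤ) • x ∈ augIdeal V ^ (n + 1) := by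
  obtain ⟨m, rfl⟩ : ∃ m, n = m + 1 := ⟨n - 1, by omega⟩
  have : ((2 : ℤ) : R V) * x ∈ augIdeal V ^ (m + 2) := by
    have h2 : ((2 : ℤ) : R V) = 2 := by push_cast; ring
    rw [h2]
    exact two_mul_mem V m x hx
  rw [zsmul_eq_mul]
  exact this




def eps : ZMod 2 → ℤ := fun a => if a = 0 then 1 else -1

lemma eps_add (a b : ZMod 2) : eps (a + b) = eps a * eps b := by
  revert a b; decide

lemma eps_zero : eps 0 = 1 := rfl

noncomputable def chiHom (φ : V →ₗ[ZMod 2] ZMod 2) : Multiplicative V →* ℤ where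
  toFun v := eps (φ v.toAdd)
  map_one' := by simp [eps_zero, show φ 0 = 0 from map_zero φ]
  map_mul' a b := by
    show eps (φ ((a * b).toAdd)) = eps (φ a.toAdd) * eps (φ b.toAdd)
    rw [show (a * b).toAdd = a.toAdd + b.toAdd from rfl, map_add, eps_add]

noncomputable def chi (φ : V →ₗ[ZMod 2] ZMod 2) : R V →ₐ[ℤ] ℤ :=
  AddMonoidAlgebra.lift ℤ ℤ V (chiHom V φ)

lemma chi_g (φ : V →ₗ[ZMod 2] ZMod 2) (v : V) : chi V φ (g V v) = eps (φ v) := by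
  simp [chi, g, AddMonoidAlgebra.lift_single, chiHom]

lemma two_dvd_chi (φ : V →ₗ[ZMod 2] ZMod 2) (x : R V) (hx : x ∈ augIdeal V) :
    (2 : ℤ) ∣ chi V φ x := by
  have hx' := mem_span_gsub V x hx
  clear hx
  induction hx' using Submodule.span_induction with
  | mem z hz =>
      obtain ⟨v, rfl⟩ := hz
      rw [map_sub, map_one, chi_g]
      have : eps (φ v) = 1 ∨ eps (φ v) = -1 := by
        rcases (show ∀ a : ZMod 2, a = 0 ∨ a = 1 by decide) (φ v) with h | h <;>
          simp [eps, h]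
      rcases this with h | h <;> rw [h] <;> norm_num
  | zero => simp
  | add a b _ _ ha hb => rw [map_add]; exact dvd_add ha hb
  | smul c a _ ha => rw [map_zsmul]; exact Dvd.dvd.mul_left ha c

lemma pow_dvd_chi (φ : V →ₗ[ZMod 2] ZMod 2) (m : ℕ) (x : R V)
    (hx : x ∈ augIdeal V ^ m) : (2 : ℤ) ^ m ∣ chi V φ x := by
  induction m generalizing x with
  | zero => simp
  | succ k ih =>
      rw [pow_succ] at hx
      refine Submodule.mul_induction_on hx (fun a ha b hb => ?_) (fun y z hy hz => ?_)
      · rw [map_mul, pow_succ]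
        exact mul_dvd_mul (ih a ha) (two_dvd_chi V φ b hb)
      · rw [map_add]; exact dvd_add hy hz


variable {ι : Type} (b : Module.Basis ι (ZMod 2) V)

noncomputable def xT (T : Finset ι) : R V := ∏ i ∈ T, (g V (b i) - 1)

lemma xT_empty : xT V b ∅ = 1 := by simp [xT]

lemma xT_mem (T : Finset ι) : xT V b T ∈ augIdeal V ^ T.card := by
  classical
  induction T using Finset.induction with
  | empty => simp [xT]
  | insert _ _ h ih =>
      rw [xT, Finset.prod_insert h, Finset.card_insert_of_notMem h, pow_succ']
      exact Ideal.mul_mem_mul (gsub_mem V _) ih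

lemma two_mul_mem' (m : ℕ) (hm : 0 < m) (x : R V) (hx : x ∈ augIdeal V ^ m) :
    2 * x ∈ augIdeal V ^ (m + 1) := by
  obtain ⟨k, rfl⟩ : ∃ k, m = k + 1 := ⟨m - 1, by omega⟩
  exact two_mul_mem V k x hx

lemma pow2_mul_xT_mem (T : Finset ι) (hT : T.Nonempty) (j : ℕ) :
    (2 : R V) ^ j * xT V b T ∈ augIdeal V ^ (T.card + j) := by
  induction j with
  | zero => simpa using xT_mem V b T
  | succ k ih =>
      have hpos : 0 < T.card + k := by
        have := Finset.card_pos.mpr hT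
        omega
      have h2 := two_mul_mem' V (T.card + k) hpos _ ih
      have heq : (2 : R V) ^ (k + 1) * xT V b T
          = 2 * ((2 : R V) ^ k * xT V b T) := by ring
      rw [heq]
      exact h2

lemma g_sum (T : Finset ι) : g V (∑ i ∈ T, b i) = ∏ i ∈ T, g V (b i) := by
  show _ = ∏ i ∈ T, AddMonoidAlgebra.single (b i) (1 : ℤ)
  rw [AddMonoidAlgebra.prod_single, Finset.prod_const_one]
  rfl

lemma prod_expand [DecidableEq ι] (T : Finset ι) :
    ∏ i ∈ T, g V (b i) = ∑ T' ∈ T.powerset, xT V b T' := by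
  have h : ∀ i ∈ T, g V (b i) = (g V (b i) - 1) + 1 := fun i _ => by ring
  rw [Finset.prod_congr rfl h, Finset.prod_add]
  exact Finset.sum_congr rfl fun t _ => by simp [xT]

noncomputable def vfun [DecidableEq ι] (T : Finset ι) : R V :=
  if T = ∅ then 0 else xT V b T

lemma gsub_mem_span [DecidableEq ι] (v : V) :
    g V v - 1 ∈ Submodule.span ℤ (Set.range (vfun V b)) := by
  set T := (b.repr v).support with hT
  have hv : ∑ i ∈ T, b i = v := by
    have h1 : ∀ i ∈ T, b i = (b.repr v) i • b i := by
      intro i hi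
      have hne : (b.repr v) i ≠ 0 := Finsupp.mem_support_iff.mp hi
      have : (b.repr v) i = 1 := by
        rcases (show ∀ a : ZMod 2, a = 0 ∨ a = 1 by decide) ((b.repr v) i) with h | h
        · exact absurd h hne
        · exact h
      rw [this, one_smul]
    rw [Finset.sum_congr rfl h1]
    have h2 := b.linearCombination_repr v
    rw [Finsupp.linearCombination_apply, Finsupp.sum] at h2
    exact h2
  have hexp : g V v - 1 = ∑ T' ∈ T.powerset.erase ∅, xT V b T' := by
    rw [← hv, g_sum, prod_expand]
    have h0 : (∅ : Finset ι) ∈ T.powerset := Finset.empty_mem_powerset T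
    rw [← Finset.add_sum_erase _ _ h0, xT_empty]
    ring
  rw [hexp]
  refine Submodule.sum_mem _ fun T' hT' => ?_
  have hne : T' ≠ ∅ := (Finset.mem_erase.mp hT').1
  have : xT V b T' = vfun V b T' := by simp [vfun, hne]
  rw [this]
  exact Submodule.subset_span ⟨T', rfl⟩

lemma mem_span_xT [DecidableEq ι] (x : R V) (hx : x ∈ augIdeal V) :
    x ∈ Submodule.span ℤ (Set.range (vfun V b)) := by
  have h1 := mem_span_gsub V x hx
  refine Submodule.span_le.mpr ?_ h1
  rintro z ⟨v, rfl⟩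
  exact gsub_mem_span V b v


noncomputable def phiU [DecidableEq ι] (U : Finset ι) : V →ₗ[ZMod 2] ZMod 2 :=
  b.constr ℕ fun i => if i ∈ U then 1 else 0

lemma phiU_basis [DecidableEq ι] (U : Finset ι) (i : ι) :
    phiU V b U (b i) = if i ∈ U then 1 else 0 := b.constr_basis _ _ _

lemma chi_xT [DecidableEq ι] (U T : Finset ι) :
    chi V (phiU V b U) (xT V b T) = if T ⊆ U then (-2 : ℤ) ^ T.card else 0 := by
  rw [xT, map_prod]
  have h : ∀ i ∈ T, chi V (phiU V b U) (g V (b i) - 1)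
      = if i ∈ U then (-2 : ℤ) else 0 := by
    intro i _
    rw [map_sub, map_one, chi_g, phiU_basis]
    by_cases h : i ∈ U <;> simp [h, eps]
  rw [Finset.prod_congr rfl h]
  by_cases hTU : T ⊆ U
  · rw [if_pos hTU, Finset.prod_congr rfl (fun i hi => if_pos (hTU hi)),
      Finset.prod_const]
  · rw [if_neg hTU]
    obtain ⟨i, hiT, hiU⟩ := Finset.not_subset.mp hTU
    exact Finset.prod_eq_zero hiT (by simp [hiU])

lemma neg_one_pow_sub (k w : ℕ) (h : w ≤ k) :
    (-1 : ℤ) ^ (k - w) = (-1) ^ k * (-1) ^ w := by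
  conv_rhs => rw [← Nat.sub_add_cancel h]
  rw [pow_add, mul_assoc, ← pow_add]
  have : (-1 : ℤ) ^ (w + w) = 1 := Even.neg_one_pow ⟨w, rfl⟩
  rw [this, mul_one]

lemma mobius_inner [DecidableEq ι] (T T0 : Finset ι) :
    ∑ U ∈ T0.powerset,
        (-1 : ℤ) ^ (T0.card - U.card) * (if T ⊆ U then (-2 : ℤ) ^ T.card else 0)
      = if T = T0 then (-2 : ℤ) ^ T0.card else 0 := by
  simp only [mul_ite, mul_zero]
  rw [← Finset.sum_filter]
  by_cases hTT0 : T ⊆ T0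
  · have hre : ∑ U ∈ T0.powerset.filter (fun U => T ⊆ U),
        (-1 : ℤ) ^ (T0.card - U.card) * (-2 : ℤ) ^ T.card
        = ∑ W ∈ (T0 \ T).powerset,
            (-1 : ℤ) ^ ((T0 \ T).card - W.card) * (-2 : ℤ) ^ T.card := by
      refine Finset.sum_nbij' (fun U => U \ T) (fun W => T ∪ W) ?_ ?_ ?_ ?_ ?_
      · intro U hU
        rw [Finset.mem_filter, Finset.mem_powerset] at hU
        rw [Finset.mem_powerset]
        exact Finset.sdiff_subset_sdiff hU.1 le_rfl
      · intro W hW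
        rw [Finset.mem_powerset] at hW
        rw [Finset.mem_filter, Finset.mem_powerset]
        constructor
        · exact Finset.union_subset hTT0 (hW.trans (Finset.sdiff_subset))
        · exact Finset.subset_union_left
      · intro U hU
        rw [Finset.mem_filter] at hU
        exact Finset.union_sdiff_of_subset hU.2
      · intro W hW
        rw [Finset.mem_powerset] at hW
        have hdisj : Disjoint T W :=
          Finset.disjoint_of_subset_right hW (Finset.disjoint_sdiff)
        exact Finset.union_sdiff_cancel_left hdisj
      · intro U hU
        rw [Finset.mem_filter, Finset.mem_powerset] at hU
        show (-1 : ℤ) ^ (T0.card - U.card) * (-2 : ℤ) ^ T.card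
            = (-1 : ℤ) ^ ((T0 \ T).card - (U \ T).card) * (-2 : ℤ) ^ T.card
        have h1 : (U \ T).card = U.card - T.card := Finset.card_sdiff_of_subset hU.2
        have h2 : (T0 \ T).card = T0.card - T.card := Finset.card_sdiff_of_subset hTT0
        have h3 : T.card ≤ U.card := Finset.card_le_card hU.2
        have h4 : U.card ≤ T0.card := Finset.card_le_card hU.1
        have he : T0.card - U.card = (T0 \ T).card - (U \ T).card := by omega
        rw [he]
    rw [hre]
    have hterm : ∀ W ∈ (T0 \ T).powerset,
        (-1 : ℤ) ^ ((T0 \ T).card - W.card) * (-2 : ℤ) ^ T.card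
        = ((-1 : ℤ) ^ ((T0 \ T).card) * (-2 : ℤ) ^ T.card) * (-1) ^ W.card := by
      intro W hW
      rw [Finset.mem_powerset] at hW
      rw [neg_one_pow_sub _ _ (Finset.card_le_card hW)]
      ring
    rw [Finset.sum_congr rfl hterm, ← Finset.mul_sum,
      Finset.sum_powerset_neg_one_pow_card]
    by_cases heq : T = T0
    · subst heq
      simp
    · have hne : T0 \ T ≠ ∅ := by
        intro hcon
        exact heq (Finset.Subset.antisymm hTT0
          (Finset.sdiff_eq_empty_iff_subset.mp hcon))
      rw [if_neg hne, if_neg heq, mul_zero]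
  · have hfil : T0.powerset.filter (fun U => T ⊆ U) = ∅ := by
      refine Finset.filter_false_of_mem ?_
      intro U hU hcon
      rw [Finset.mem_powerset] at hU
      exact hTT0 (hcon.trans hU)
    have hne : T ≠ T0 := fun h => hTT0 (h ▸ le_rfl)
    rw [hfil, Finset.sum_empty, if_neg hne]


lemma sum_chi [DecidableEq ι] (c : Finset ι →₀ ℤ) (φ : V →ₗ[ZMod 2] ZMod 2) :
    chi V φ (c.sum fun T a => a • vfun V b T)
      = ∑ T ∈ c.support, c T * chi V φ (vfun V b T) := by
  rw [Finsupp.sum, map_sum]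
  exact Finset.sum_congr rfl fun T _ => by rw [map_zsmul, smul_eq_mul]

lemma chi_vfun [DecidableEq ι] (U T : Finset ι) :
    chi V (phiU V b U) (vfun V b T)
      = if T = ∅ then 0 else if T ⊆ U then (-2 : ℤ) ^ T.card else 0 := by
  by_cases h : T = ∅ <;> simp [vfun, h, chi_xT]

end Two

section Main

variable [Module (ZMod 2) V]

lemma mem_pow_of_dvd (n : ℕ) (x : R V) (hx : x ∈ augIdeal V)
    (hd : ∀ φ : V →ₗ[ZMod 2] ZMod 2, (2 : ℤ) ^ n ∣ chi V φ x) :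
    x ∈ augIdeal V ^ n := by
  classical
  let b : Module.Basis (Module.Basis.ofVectorSpaceIndex (ZMod 2) V) (ZMod 2) V :=
    Module.Basis.ofVectorSpace (ZMod 2) V
  obtain ⟨c, hc⟩ :=
    Finsupp.mem_span_range_iff_exists_finsupp.mp (mem_span_xT V b x hx)
  have key : ∀ T0 : Finset (Module.Basis.ofVectorSpaceIndex (ZMod 2) V), T0 ≠ ∅ →
      (2 : ℤ) ^ n ∣ c T0 * (-2) ^ T0.card := by
    intro T0 hT0
    have h1 : ∀ U, chi V (phiU V b U) x
        = ∑ T ∈ c.support, c T * chi V (phiU V b U) (vfun V b T) := fun U => by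
      rw [← hc]; exact sum_chi V b c _
    have hL : ∑ U ∈ T0.powerset,
        (-1 : ℤ) ^ (T0.card - U.card) * chi V (phiU V b U) x
        = c T0 * (-2) ^ T0.card := by
      calc ∑ U ∈ T0.powerset, (-1 : ℤ) ^ (T0.card - U.card) * chi V (phiU V b U) x
          = ∑ U ∈ T0.powerset, ∑ T ∈ c.support,
              c T * ((-1 : ℤ) ^ (T0.card - U.card) * chi V (phiU V b U) (vfun V b T)) := by
            refine Finset.sum_congr rfl fun U _ => ?_
            rw [h1 U, Finset.mul_sum]
            exact Finset.sum_congr rfl fun T _ => by ring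
        _ = ∑ T ∈ c.support, c T * ∑ U ∈ T0.powerset,
              (-1 : ℤ) ^ (T0.card - U.card) * chi V (phiU V b U) (vfun V b T) := by
            rw [Finset.sum_comm]
            exact Finset.sum_congr rfl fun T _ => by rw [Finset.mul_sum]
        _ = ∑ T ∈ c.support, (if T = T0 then c T * (-2 : ℤ) ^ T0.card else 0) := by
            refine Finset.sum_congr rfl fun T _ => ?_
            by_cases hT : T = ∅
            · subst hT
              have hz : ∀ U ∈ T0.powerset,
                  (-1 : ℤ) ^ (T0.card - U.card) * chi V (phiU V b U) (vfun V b ∅) = 0 :=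
                fun U _ => by rw [chi_vfun]; simp
              rw [Finset.sum_congr rfl hz, Finset.sum_const_zero, mul_zero,
                if_neg (fun h => hT0 h.symm)]
            · have hs : ∀ U ∈ T0.powerset,
                  (-1 : ℤ) ^ (T0.card - U.card) * chi V (phiU V b U) (vfun V b T)
                  = (-1 : ℤ) ^ (T0.card - U.card)
                      * (if T ⊆ U then (-2 : ℤ) ^ T.card else 0) :=
                fun U _ => by rw [chi_vfun, if_neg hT]
              rw [Finset.sum_congr rfl hs, mobius_inner]
              by_cases he : T = T0
              · subst he; simp
              · simp [he]
        _ = if T0 ∈ c.support then c T0 * (-2 : ℤ) ^ T0.card else 0 :=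
            Finset.sum_ite_eq' _ _ _
        _ = c T0 * (-2) ^ T0.card := by
            by_cases hmem : T0 ∈ c.support
            · rw [if_pos hmem]
            · rw [if_neg hmem, Finsupp.notMem_support_iff.mp hmem, zero_mul]
    rw [← hL]
    exact Finset.dvd_sum fun U _ => Dvd.dvd.mul_left (hd _) _
  rw [← hc, Finsupp.sum]
  refine Submodule.sum_mem _ fun T _ => ?_
  by_cases hT : T = ∅
  · simp [vfun, hT]
  · have hTne : T.Nonempty := Finset.nonempty_iff_ne_empty.mpr hT
    rw [show vfun V b T = xT V b T by simp [vfun, hT]]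
    by_cases hcard : n ≤ T.card
    · have hmem := Ideal.pow_le_pow_right hcard (xT_mem V b T)
      rw [zsmul_eq_mul]
      exact Ideal.mul_mem_left _ _ hmem
    · have h1 : (2 : ℤ) ^ n ∣ c T * 2 ^ T.card := by
        have h0 := key T hT
        have hmp : ((-1 : ℤ)) ^ T.card * (-2) ^ T.card = 2 ^ T.card := by
          rw [← mul_pow]; norm_num
        have heq : c T * 2 ^ T.card = (-1 : ℤ) ^ T.card * (c T * (-2) ^ T.card) := by
          rw [← hmp]; ring
        rw [heq]
        exact Dvd.dvd.mul_left h0 _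
      have h2 : (2 : ℤ) ^ (n - T.card) ∣ c T := by
        have hsplit : (2 : ℤ) ^ (n - T.card) * 2 ^ T.card = 2 ^ n := by
          rw [← pow_add]; congr 1; omega
        have h3 : (2 : ℤ) ^ (n - T.card) * 2 ^ T.card ∣ c T * 2 ^ T.card := by
          rw [hsplit]; exact h1
        exact (mul_dvd_mul_iff_right (pow_ne_zero T.card
          (by norm_num : (2 : ℤ) ≠ 0))).mp h3
      obtain ⟨d, hdd⟩ := h2
      have hmem := pow2_mul_xT_mem V b T hTne (n - T.card)
      rw [show T.card + (n - T.card) = n by omega] at hmem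
      rw [zsmul_eq_mul, hdd]
      have heq2 : (((2 : ℤ) ^ (n - T.card) * d : ℤ) : R V) * xT V b T
          = (d : R V) * ((2 : R V) ^ (n - T.card) * xT V b T) := by
        push_cast
        ring
      rw [heq2]
      exact Ideal.mul_mem_left _ _ hmem

end Main


variable [Module (ZMod 2) V]

lemma main_final (n : ℕ) (x : R V) (hx : x ∈ augIdeal V)
    (h2 : (2 : ℤ) • x ∈ augIdeal V ^ (n + 1)) : x ∈ augIdeal V ^ n := by
  apply mem_pow_of_dvd V n x hx
  intro φ
  have hdvd := pow_dvd_chi V φ (n + 1) _ h2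
  rw [map_zsmul, smul_eq_mul] at hdvd
  obtain ⟨k, hk⟩ := hdvd
  refine ⟨k, ?_⟩
  have h2' : (2 : ℤ) * chi V φ x = 2 * (2 ^ n * k) := by
    rw [hk, pow_succ]; ring
  exact mul_left_cancel₀ (by norm_num) h2'

end Aux

/-- The quotient `I(V)^m / I(V)^k` of powers of the augmentation ideal,
as a quotient of `ℤ`-modules. -/
noncomputable abbrev powQuot (V : Type) [AddCommGroup V] (m k : ℕ) : Type :=
  (Submodule.restrictScalars ℤ (augIdeal V ^ m)) ⧸
    (Submodule.comap (Submodule.restrictScalars ℤ (augIdeal V ^ m)).subtype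
      (Submodule.restrictScalars ℤ (augIdeal V ^ k)))

/-- The canonical map `I(V)^b / I(V)^k → I(V)^a / I(V)^k` induced by an inclusion
`I(V)^b ⊆ I(V)^a`. -/
noncomputable def incQuot (V : Type) [AddCommGroup V] (a b k : ℕ)
    (h : augIdeal V ^ b ≤ augIdeal V ^ a) :
    powQuot V b k →ₗ[ℤ] powQuot V a k :=
  Submodule.mapQ _ _ (Submodule.inclusion (fun x hx => h hx)) (fun _ hx => hx)

/-- For an elementary abelian 2-group `V` and `n > 0`, the canonical map
`I(V)^n/I(V)^(n+1) → R^n(V) = I(V)/I(V)^(n+1)` is injective with image exactly the largest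
subgroup of `R^n(V)` annihilated by `2`. -/
theorem stmt5 (V : Type) [AddCommGroup V] [Module (ZMod 2) V] (n : ℕ) (hn : 0 < n) :
    Function.Injective (incQuot V 1 n (n + 1) (Ideal.pow_le_pow_right hn)) ∧
    LinearMap.range (incQuot V 1 n (n + 1) (Ideal.pow_le_pow_right hn)) =
      LinearMap.ker ((2 : ℤ) • (LinearMap.id : powQuot V 1 (n + 1) →ₗ[ℤ] powQuot V 1 (n + 1))) := by
  constructor
  · rw [← LinearMap.ker_eq_bot]
    rw [LinearMap.ker_eq_bot']
    intro z hz
    obtain ⟨y, rfl⟩ := Submodule.Quotient.mk_surjective _ z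
    erw [incQuot, Submodule.mapQ_apply] at hz
    rw [Submodule.Quotient.mk_eq_zero] at hz ⊢
    simp only [Submodule.mem_comap, Submodule.subtype_apply,
      Submodule.coe_inclusion, Submodule.restrictScalars_mem] at hz ⊢
    exact hz
  · ext z
    simp only [LinearMap.mem_range, LinearMap.mem_ker, LinearMap.smul_apply,
      LinearMap.id_apply]
    constructor
    · rintro ⟨w, rfl⟩
      obtain ⟨y, rfl⟩ := Submodule.Quotient.mk_surjective _ w
      erw [incQuot, Submodule.mapQ_apply, ← Submodule.Quotient.mk_smul,
        Submodule.Quotient.mk_eq_zero]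
      simp only [Submodule.mem_comap, Submodule.subtype_apply,
        Submodule.restrictScalars_mem]
      have hy : (y : AddMonoidAlgebra ℤ V) ∈ augIdeal V ^ n := y.2
      exact Aux.two_smul_mem V hn _ hy
    · intro h
      obtain ⟨y, rfl⟩ := Submodule.Quotient.mk_surjective _ z
      rw [← Submodule.Quotient.mk_smul, Submodule.Quotient.mk_eq_zero] at h
      simp only [Submodule.mem_comap, Submodule.subtype_apply,
        Submodule.restrictScalars_mem] at h
      have hy1 : (y : AddMonoidAlgebra ℤ V) ∈ augIdeal V := by
        have := y.2
        simpa [pow_one] using this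
      have hyn : (y : AddMonoidAlgebra ℤ V) ∈ augIdeal V ^ n :=
        Aux.main_final V n _ hy1 h
      refine ⟨Submodule.Quotient.mk ⟨(y : AddMonoidAlgebra ℤ V), hyn⟩, ?_⟩
      erw [incQuot, Submodule.mapQ_apply]
      congr 1
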